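/- Let (r_q)_{q ∈ ℤ} and (R_q)_{q ∈ ℤ} be strictly increasing sequences of positive reals with r_q, R_q → 0 as q → −∞ and r_q, R_q → +∞ as q → +∞, and suppose r_{q+1} < R_{q+1} for all q. Then there exists a class-K∞ function Υ : ℝ≥0 → ℝ≥0 such that for every q ∈ ℤ and every s with r_{q+1} < s ≤ r_{q+2}, one has Υ(s) ≥ R_{q+2}². -/

import Mathlib

open Filter NNReal

/-- A class-K∞ function: continuous, zero at zero, strictly increasing, unbounded. -/
def IsKInfty (Υ : ℝ≥0 → ℝ≥0) : Prop :=
  Continuous Υ ∧ Υ 0 = 0 ∧ StrictMono Υ ∧ ∀ M, ∃ s, M < Υ s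

theorem exists_KInfty_overshoot_above_squares
    (r R : ℤ → ℝ≥0)
    (hrpos : ∀ q, 0 < r q) (hRpos : ∀ q, 0 < R q)
    (hrmono : StrictMono r) (hRmono : StrictMono R)
    (hrbot : Tendsto r atBot (nhds 0)) (hRbot : Tendsto R atBot (nhds 0))
    (hrtop : Tendsto r atTop atTop) (hRtop : Tendsto R atTop atTop)
    (hrR : ∀ q : ℤ, r (q + 1) < R (q + 1)) :
    ∃ Υ : ℝ≥0 → ℝ≥0, IsKInfty Υ ∧
      ∀ q : ℤ, ∀ s : ℝ≥0, r (q + 1) < s → s ≤ r (q + 2) →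
        R (q + 2) ^ 2 ≤ Υ s := by
  classical
  set c : ℤ → ℝ≥0 := fun q => R (q + 1) ^ 2 with hcdef
  set f : ℤ → ℝ≥0 → ℝ≥0 :=
    fun q s => c q * min 1 ((s - r (q - 1)) / (r q - r (q - 1))) with hfdef
  have hcmono : StrictMono c := fun p q h => by
    dsimp only [c]
    exact pow_lt_pow_left₀ (hRmono (by omega)) (zero_le) (by norm_num)
  have hrsub : ∀ q : ℤ, (0 : ℝ≥0) < r q - r (q - 1) := fun q =>
    tsub_pos_of_lt (hrmono (by omega))
  have hfle : ∀ q s, f q s ≤ c q := fun q s => by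
    dsimp only [f]
    exact mul_le_of_le_one_right (zero_le) (min_le_left _ _)
  have hfzero : ∀ q s, s ≤ r (q - 1) → f q s = 0 := fun q s h => by
    dsimp only [f]
    rw [tsub_eq_zero_of_le h]
    simp
  have hfsat : ∀ q s, r q ≤ s → f q s = c q := fun q s h => by
    dsimp only [f]
    have h1 : (1 : ℝ≥0) ≤ (s - r (q - 1)) / (r q - r (q - 1)) := by
      rw [one_le_div (hrsub q)]
      exact tsub_le_tsub_right h _
    rw [min_eq_left h1, mul_one]
  have hfmono : ∀ q, Monotone (f q) := fun q a b h => by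
    dsimp only [f]
    refine mul_le_mul_right (min_le_min le_rfl ?_) _
    gcongr
  have hfcont : ∀ q, Continuous (f q) := fun q => by
    dsimp only [f]
    refine continuous_const.mul (continuous_const.min ?_)
    simp only [div_eq_mul_inv]
    exact (continuous_id.sub continuous_const).mul continuous_const
  have hbdd : ∀ s, BddAbove (Set.range fun q => f q s) := by
    intro s
    obtain ⟨Q, hQ⟩ := (hrtop.eventually_ge_atTop s).exists
    refine ⟨c Q, ?_⟩
    rintro x ⟨p, rfl⟩
    rcases le_or_gt p Q with h | h
    · exact (hfle p s).trans (hcmono.monotone h)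
    · exact le_trans (le_of_eq (hfzero p s (hQ.trans (hrmono.monotone (by omega)))))
        (zero_le)
  set g : ℝ≥0 → ℝ≥0 := fun s => ⨆ q, f q s with hgdef
  have hgf : ∀ q s, f q s ≤ g s := fun q s => le_ciSup (hbdd s) q
  have hgmono : Monotone g := fun a b h => ciSup_mono (hbdd b) fun q => hfmono q h
  have hg0 : g 0 = 0 := by
    have h : (fun q => f q 0) = fun _ : ℤ => (0 : ℝ≥0) :=
      funext fun q => hfzero q 0 (zero_le)
    dsimp only [g]
    rw [h, ciSup_const]
  have hgsmall : ∀ (q : ℤ) (s : ℝ≥0), s ≤ r q → g s ≤ c q := by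
    intro q s hs
    refine ciSup_le fun p => ?_
    rcases le_or_gt p q with h | h
    · exact (hfle p s).trans (hcmono.monotone h)
    · rw [hfzero p s (hs.trans (hrmono.monotone (by omega)))]
      exact zero_le
  have hc0 : Tendsto c atBot (nhds 0) := by
    have h1 : Tendsto (fun q : ℤ => q + 1) atBot atBot := tendsto_atBot_add_const_right _ _ tendsto_id
    have h2 : Tendsto (fun x : ℝ≥0 => x ^ 2) (nhds 0) (nhds 0) := by
      have := (continuous_pow 2 (M := ℝ≥0)).tendsto 0
      simpa using this
    exact h2.comp (hRbot.comp h1)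
  have hgcont : Continuous g := by
    rw [continuous_iff_continuousAt]
    intro s₀
    rcases eq_or_lt_of_le (zero_le : (0:ℝ≥0) ≤ s₀) with h0 | h0
    · -- continuity at 0
      rw [ContinuousAt, ← h0, hg0]
      refine tendsto_order.2 ⟨fun a ha => absurd ha (not_lt.2 (zero_le : (0:ℝ≥0) ≤ a)), fun a ha => ?_⟩
      obtain ⟨q, hq⟩ := (hc0.eventually (gt_mem_nhds ha)).exists
      have hmem : Set.Iio (r q) ∈ nhds (0 : ℝ≥0) := Iio_mem_nhds (hrpos q)
      filter_upwards [hmem] with x hx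
      exact lt_of_le_of_lt (hgsmall q x (le_of_lt hx)) hq
    · -- continuity at s₀ > 0
      obtain ⟨Q0, hQ0⟩ := (hrtop.eventually_ge_atTop s₀).exists
      obtain ⟨N, hN⟩ := eventually_atBot.1 (hrbot.eventually (gt_mem_nhds h0))
      have hBdd : ∃ b : ℤ, ∀ z : ℤ, s₀ ≤ r z → b ≤ z := by
        refine ⟨N + 1, fun z hz => ?_⟩
        by_contra h
        push_neg at h
        exact absurd hz (not_le.2 (hN z (by omega)))
      obtain ⟨q, hq, hqmin⟩ := Int.exists_least_of_bdd hBdd ⟨Q0, hQ0⟩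
      have h1 : r (q - 1) < s₀ := by
        by_contra h
        push_neg at h
        exact absurd (hqmin _ h) (by omega)
      have h2 : s₀ < r (q + 1) := lt_of_le_of_lt hq (hrmono (by omega))
      have hmem : Set.Ioo (r (q - 1)) (r (q + 1)) ∈ nhds s₀ := Ioo_mem_nhds h1 h2
      have hformula : ∀ s ∈ Set.Ioo (r (q - 1)) (r (q + 1)),
          g s = f (q - 1) s ⊔ (f q s ⊔ f (q + 1) s) := by
        rintro s ⟨hs1, hs2⟩
        refine le_antisymm (ciSup_le fun p => ?_)
          (sup_le (hgf _ _) (sup_le (hgf _ _) (hgf _ _)))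
        rcases le_or_gt p (q - 1) with hp | hp
        · have hps : f p s = c p :=
            hfsat p s ((hrmono.monotone hp).trans hs1.le)
          have hqs : f (q - 1) s = c (q - 1) := hfsat _ s hs1.le
          rw [hps]
          exact le_sup_of_le_left (hqs ▸ hcmono.monotone hp)
        · rcases lt_or_ge p (q + 2) with hp2 | hp2
          · have : p = q ∨ p = q + 1 := by omega
            rcases this with rfl | rfl
            · exact le_sup_of_le_right (le_sup_left)
            · exact le_sup_of_le_right (le_sup_right)
          · rw [hfzero p s (hs2.le.trans (hrmono.monotone (by omega)))]
            exact zero_le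
      have hcont3 : Continuous fun s => f (q - 1) s ⊔ (f q s ⊔ f (q + 1) s) :=
        (hfcont (q - 1)).max ((hfcont q).max (hfcont (q + 1)))
      refine hcont3.continuousAt.congr ?_
      filter_upwards [hmem] with s hs
      exact (hformula s hs).symm
  refine ⟨fun s => s + g s, ⟨continuous_id.add hgcont, by simp [hg0],
    fun a b h => add_lt_add_of_lt_of_le h (hgmono h.le),
    fun M => ⟨M + 1, lt_of_lt_of_le (lt_add_one M) le_self_add⟩⟩, ?_⟩
  intro q s hs1 _
  have heq : f (q + 1) s = c (q + 1) := hfsat _ _ hs1.le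
  have hidx : c (q + 1) = R (q + 2) ^ 2 := by
    dsimp only [c]
    norm_num
    ring_nf
  calc R (q + 2) ^ 2 = c (q + 1) := hidx.symm
    _ = f (q + 1) s := heq.symm
    _ ≤ g s := hgf _ _
    _ ≤ s + g s := le_add_self
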